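/- Let λ(θ) = Σ_{x∈ℤ} w_x e^{iθx} be an absolutely convergent trigonometric series and set m(r) = ∫₀^r (Σ_{|x|>t} |w_x|) dt. Then for all real θ ≠ θ′, |λ(θ) − λ(θ′)| ≤ 2·|θ−θ′|·m(1/|θ−θ′|). -/

import Mathlib

open Filter Topology

lemma exp_two_mul_I_sub_one (z : ℂ) :
    Complex.exp (2*z*Complex.I) - 1 = Complex.exp (z*Complex.I) * (2 * Complex.sin z * Complex.I) := by
  have h : Complex.exp (z*Complex.I) * Complex.exp (-z*Complex.I) = 1 := by
    rw [← Complex.exp_add]; ring_nf; exact Complex.exp_zero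
  have h2 : Complex.exp (2*z*Complex.I) = Complex.exp (z*Complex.I) * Complex.exp (z*Complex.I) := by
    rw [← Complex.exp_add]; ring_nf
  rw [h2, Complex.sin]
  linear_combination h - Complex.exp (z*Complex.I) * (Complex.exp (-z*Complex.I) - Complex.exp (z*Complex.I)) * Complex.I_mul_I

lemma exp_mul_I_sub_one_abs_le (s : ℝ) :
    ‖Complex.exp ((s : ℂ) * Complex.I) - 1‖ ≤ min 2 |s| := by
  refine le_min ?_ ?_
  · have h := norm_sub_le (Complex.exp ((s : ℂ) * Complex.I)) 1
    simp only [Complex.norm_exp_ofReal_mul_I, norm_one] at h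
    linarith
  · have h1 : ((s : ℂ)) = 2 * ((s/2 : ℝ) : ℂ) := by push_cast; ring
    rw [h1, exp_two_mul_I_sub_one, norm_mul, Complex.norm_exp_ofReal_mul_I, one_mul,
      norm_mul, norm_mul, Complex.norm_I, mul_one, ← Complex.ofReal_sin, Complex.norm_two,
      Complex.norm_real, Real.norm_eq_abs]
    calc 2 * |Real.sin (s/2)| ≤ 2 * |s/2| := by
          have := Real.abs_sin_le_abs (x := s/2)
          linarith
      _ = |s| := by rw [abs_div]; norm_num; ring

theorem stmt12 (w : ℤ → ℝ) (hw : Summable (fun x : ℤ => |w x|)) :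
    ∀ θ θ' : ℝ, θ ≠ θ' →
      ‖(∑' x : ℤ, (w x : ℂ) * Complex.exp (Complex.I * θ * x)) -
          ∑' x : ℤ, (w x : ℂ) * Complex.exp (Complex.I * θ' * x)‖ ≤
        2 * |θ - θ'| *
          ∫ t in (0:ℝ)..(1 / |θ - θ'|), ∑' x : ℤ, if t < |(x : ℝ)| then |w x| else 0 := by
  intro θ θ' hne
  set δ := θ - θ' with hδdef
  have hδ0 : 0 < |δ| := abs_pos.2 (sub_ne_zero.2 hne)
  set r := 1 / |δ| with hrdef
  have hr0 : 0 < r := by positivity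
  have hrδ : |δ| * r = 1 := by rw [hrdef, mul_one_div, div_self (ne_of_gt hδ0)]
  have hnorm : ∀ (ψ : ℝ) (x : ℤ), ‖(w x : ℂ) * Complex.exp (Complex.I * ψ * x)‖ = |w x| := by
    intro ψ x
    have h1 : Complex.I * (ψ : ℂ) * (x : ℂ) = ((ψ * x : ℝ) : ℂ) * Complex.I := by
      push_cast; ring
    simp only [norm_mul, h1, Complex.norm_exp_ofReal_mul_I,
      Complex.norm_real, Real.norm_eq_abs, mul_one]
  have hsum : ∀ ψ : ℝ, Summable (fun x : ℤ => (w x : ℂ) * Complex.exp (Complex.I * ψ * x)) := by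
    intro ψ
    apply Summable.of_norm
    have : (fun x : ℤ => ‖(w x : ℂ) * Complex.exp (Complex.I * ψ * x)‖)
        = fun x : ℤ => |w x| := funext (hnorm ψ)
    rw [this]; exact hw
  -- pointwise bound
  have hpt : ∀ x : ℤ, ‖(w x : ℂ) * Complex.exp (Complex.I * θ * x)
      - (w x : ℂ) * Complex.exp (Complex.I * θ' * x)‖
      ≤ |w x| * (2 * |δ| * min r |(x : ℝ)|) := by
    intro x
    have hexp : Complex.exp (Complex.I * θ * x)
        = Complex.exp (Complex.I * θ' * x) * Complex.exp (((δ * x : ℝ) : ℂ) * Complex.I) := by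
      rw [← Complex.exp_add]
      congr 1
      rw [hδdef]
      push_cast
      ring
    have hfac : (w x : ℂ) * Complex.exp (Complex.I * θ * x)
        - (w x : ℂ) * Complex.exp (Complex.I * θ' * x)
        = (w x : ℂ) * Complex.exp (Complex.I * θ' * x)
          * (Complex.exp (((δ * x : ℝ) : ℂ) * Complex.I) - 1) := by
      rw [hexp]; ring
    rw [hfac, norm_mul, hnorm θ' x]
    have hb := exp_mul_I_sub_one_abs_le (δ * x)
    have hmin : min 2 |δ * (x : ℝ)| ≤ 2 * |δ| * min r |(x : ℝ)| := by
      rcases le_total r |(x : ℝ)| with h | h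
      · rw [min_eq_left h]
        have h2 : 2 * |δ| * r = 2 := by rw [mul_assoc, hrδ, mul_one]
        rw [h2]; exact min_le_left _ _
      · rw [min_eq_right h]
        calc min 2 |δ * (x : ℝ)| ≤ |δ * (x : ℝ)| := min_le_right _ _
          _ = |δ| * |(x : ℝ)| := abs_mul _ _
          _ ≤ 2 * (|δ| * |(x : ℝ)|) := by nlinarith [abs_nonneg δ, abs_nonneg (x : ℝ)]
          _ = 2 * |δ| * |(x : ℝ)| := by ring
    exact mul_le_mul_of_nonneg_left (hb.trans hmin) (abs_nonneg _)
  -- summability of the bound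
  have hbsum : Summable (fun x : ℤ => |w x| * (2 * |δ| * min r |(x : ℝ)|)) := by
    apply Summable.of_nonneg_of_le (fun x => by positivity) (fun x => ?_) (hw.mul_right (2 * |δ| * r))
    have h1 : min r |(x : ℝ)| ≤ r := min_le_left _ _
    have h2 : 2 * |δ| * min r |(x : ℝ)| ≤ 2 * |δ| * r := by nlinarith
    nlinarith [abs_nonneg (w x)]
  have hnsum : Summable (fun x : ℤ => ‖(w x : ℂ) * Complex.exp (Complex.I * θ * x)
      - (w x : ℂ) * Complex.exp (Complex.I * θ' * x)‖) :=
    Summable.of_nonneg_of_le (fun x => norm_nonneg _) hpt hbsum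
  -- step 1: bound LHS by the sum
  have hLHS : ‖(∑' x : ℤ, (w x : ℂ) * Complex.exp (Complex.I * θ * x)) -
      ∑' x : ℤ, (w x : ℂ) * Complex.exp (Complex.I * θ' * x)‖
      ≤ ∑' x : ℤ, |w x| * (2 * |δ| * min r |(x : ℝ)|) := by
    rw [← Summable.tsum_sub (hsum θ) (hsum θ')]
    exact (norm_tsum_le_tsum_norm hnsum).trans (Summable.tsum_le_tsum hpt hnsum hbsum)
  -- step 2: each interval integral
  have hint : ∀ x : ℤ, ∫ t in (0:ℝ)..r, (if t < |(x : ℝ)| then |w x| else 0)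
      = |w x| * min r |(x : ℝ)| := by
    intro x
    set c := |(x : ℝ)| with hc
    have hc0 : (0:ℝ) ≤ c := abs_nonneg _
    rw [intervalIntegral.integral_of_le hr0.le]
    have heq : (fun t => if t < c then |w x| else 0)
        = Set.indicator (Set.Iio c) (fun _ => |w x|) := by
      funext t
      rw [Set.indicator_apply]
      rfl
    rw [heq, MeasureTheory.integral_indicator_const _ measurableSet_Iio,
      MeasureTheory.measureReal_def, MeasureTheory.Measure.restrict_apply measurableSet_Iio]
    rcases le_or_gt c r with hcr | hcr
    · have hset : Set.Iio c ∩ Set.Ioc 0 r = Set.Ioo 0 c := by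
        ext t
        simp only [Set.mem_inter_iff, Set.mem_Iio, Set.mem_Ioc, Set.mem_Ioo]
        constructor
        · rintro ⟨h1, h2, h3⟩; exact ⟨h2, h1⟩
        · rintro ⟨h1, h2⟩; exact ⟨h2, h1, by linarith⟩
      rw [hset, Real.volume_Ioo, min_eq_right hcr, smul_eq_mul,
        ENNReal.toReal_ofReal (by linarith)]
      ring
    · have hset : Set.Iio c ∩ Set.Ioc 0 r = Set.Ioc 0 r := by
        ext t
        simp only [Set.mem_inter_iff, Set.mem_Iio, Set.mem_Ioc]
        constructor
        · rintro ⟨h1, h2, h3⟩; exact ⟨h2, h3⟩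
        · rintro ⟨h1, h2⟩; exact ⟨by linarith, h1, h2⟩
      rw [hset, Real.volume_Ioc, min_eq_left hcr.le, smul_eq_mul,
        ENNReal.toReal_ofReal (by linarith)]
      ring
  -- step 3: swap integral and sum
  have hintg : ∀ x : ℤ, MeasureTheory.Integrable
      (fun t => if t < |(x : ℝ)| then |w x| else 0)
      (MeasureTheory.volume.restrict (Set.Ioc (0:ℝ) r)) := by
    intro x
    have heq : (fun t : ℝ => if t < |(x : ℝ)| then |w x| else 0)
        = Set.indicator (Set.Iio |(x : ℝ)|) (fun _ => |w x|) := by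
      funext t; rw [Set.indicator_apply]; rfl
    rw [heq]
    exact (MeasureTheory.integrableOn_const
      (measure_Ioc_lt_top).ne).indicator measurableSet_Iio
  have hnormint : (fun x : ℤ => ∫ t in Set.Ioc (0:ℝ) r, ‖if t < |(x : ℝ)| then |w x| else 0‖)
      = fun x : ℤ => |w x| * min r |(x : ℝ)| := by
    funext x
    have h1 : (fun t : ℝ => ‖if t < |(x : ℝ)| then |w x| else 0‖)
        = fun t : ℝ => if t < |(x : ℝ)| then |w x| else 0 := by
      funext t
      rw [Real.norm_of_nonneg (by split <;> positivity)]
    calc (∫ t in Set.Ioc (0:ℝ) r, ‖if t < |(x : ℝ)| then |w x| else 0‖)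
        = ∫ t in Set.Ioc (0:ℝ) r, (if t < |(x : ℝ)| then |w x| else 0) := by rw [h1]
      _ = ∫ t in (0:ℝ)..r, (if t < |(x : ℝ)| then |w x| else 0) :=
          (intervalIntegral.integral_of_le hr0.le).symm
      _ = |w x| * min r |(x : ℝ)| := hint x
  have hsumint : Summable (fun x : ℤ =>
      ∫ t in Set.Ioc (0:ℝ) r, ‖if t < |(x : ℝ)| then |w x| else 0‖) := by
    rw [hnormint]
    apply Summable.of_nonneg_of_le (fun x => by positivity) (fun x => ?_) (hw.mul_right r)
    have := min_le_left r |(x : ℝ)|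
    nlinarith [abs_nonneg (w x)]
  have hswap : ∫ t in (0:ℝ)..r, (∑' x : ℤ, if t < |(x : ℝ)| then |w x| else 0)
      = ∑' x : ℤ, ∫ t in (0:ℝ)..r, (if t < |(x : ℝ)| then |w x| else 0) := by
    rw [intervalIntegral.integral_of_le hr0.le,
      ← MeasureTheory.integral_tsum_of_summable_integral_norm hintg hsumint]
    exact tsum_congr fun x => (intervalIntegral.integral_of_le hr0.le).symm
  -- conclude
  rw [hswap]
  have hfin : ∑' x : ℤ, |w x| * (2 * |δ| * min r |(x : ℝ)|)
      = 2 * |δ| * ∑' x : ℤ, ∫ t in (0:ℝ)..r, (if t < |(x : ℝ)| then |w x| else 0) := by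
    rw [← tsum_mul_left]
    apply tsum_congr
    intro x
    rw [hint x]
    ring
  calc ‖_‖ ≤ ∑' x : ℤ, |w x| * (2 * |δ| * min r |(x : ℝ)|) := hLHS
    _ = _ := hfin
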